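/- If two symmetric operators Q¹, Q² on ℝⁿ satisfy (Q¹)² + (Q²)² = c·Id for some real constant c, then there exists an orthonormal basis of ℝⁿ in which the matrices of Q¹ and Q² are simultaneously block-diagonal, with all blocks of size 1×1 or 2×2, where each pair of corresponding 2×2 blocks has the form Q¹ₛ = [[αₛ, 0],[0, -αₛ]] and Q²ₛ = [[βₛ, γₛ],[γₛ, -βₛ]] with αₛ² + βₛ² + γₛ² = c and αₛγₛ ≠ 0. -/

import Mathlib

open Matrix

open Module Submodule
open scoped RealInnerProductSpace

set_option linter.unusedSectionVars false

variable {F : Type*} [NormedAddCommGroup F] [InnerProductSpace ℝ F] [FiniteDimensional ℝ F]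

lemma exists_unit_eigen (T : F →ₗ[ℝ] F) (hT : T.IsSymmetric) (W : Submodule ℝ F)
    (hW : ∀ x ∈ W, T x ∈ W) (hW0 : W ≠ ⊥) :
    ∃ (v : F) (μ : ℝ), v ∈ W ∧ ‖v‖ = 1 ∧ T v = μ • v := by
  haveI : Nontrivial W := Submodule.nontrivial_iff_ne_bot.mpr hW0
  set T' := T.restrict hW with hT'def
  have hT' : T'.IsSymmetric := hT.restrict_invariant hW
  have : ¬ ∀ μ : ℝ, Module.End.eigenspace (T' : W →ₗ[ℝ] W) μ = ⊥ := by
    intro hall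
    have := hT'.subsingleton_of_no_eigenvalue_finiteDimensional hall
    exact not_subsingleton_iff_nontrivial.mpr ‹Nontrivial W› this
  push_neg at this
  obtain ⟨μ, hμ⟩ := this
  obtain ⟨x, hx, hx0⟩ := Submodule.exists_mem_ne_zero_of_ne_bot hμ
  have hxe : T' x = μ • x := Module.End.mem_eigenspace_iff.mp hx
  have hxE : T (x : F) = μ • (x : F) := by
    have := congrArg (Subtype.val) hxe
    exact this
  have hxn : ‖(x : F)‖ ≠ 0 := by
    simp [norm_eq_zero, hx0, Submodule.coe_eq_zero]
  refine ⟨‖(x : F)‖⁻¹ • (x : F), μ, Submodule.smul_mem _ _ x.2, ?_, ?_⟩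
  · rw [norm_smul]; simp [hxn]
  · rw [_root_.map_smul, hxE, smul_comm]

lemma mem_pair_orthogonal {v w z : F} :
    z ∈ ((ℝ ∙ v) ⊔ (ℝ ∙ w))ᗮ ↔ ⟪v, z⟫ = 0 ∧ ⟪w, z⟫ = 0 := by
  constructor
  · intro h
    exact ⟨h v (le_sup_left (a := ℝ ∙ v) (b := ℝ ∙ w) (Submodule.mem_span_singleton_self v)),
      h w (le_sup_right (a := ℝ ∙ v) (b := ℝ ∙ w) (Submodule.mem_span_singleton_self w))⟩
  · rintro ⟨h1, h2⟩ u hu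
    rcases Submodule.mem_sup.mp hu with ⟨p, hp, q, hq, rfl⟩
    rcases Submodule.mem_span_singleton.mp hp with ⟨s, rfl⟩
    rcases Submodule.mem_span_singleton.mp hq with ⟨t, rfl⟩
    simp [inner_add_left, real_inner_smul_left, h1, h2]

lemma finrank_pair (v w : F) (hv : ‖v‖ = 1) (hw : ‖w‖ = 1) (hvw : ⟪v, w⟫ = 0) :
    finrank ℝ ((ℝ ∙ v) ⊔ (ℝ ∙ w) : Submodule ℝ F) = 2 := by
  have hv0 : v ≠ 0 := by intro h; rw [h] at hv; simp at hv
  have hw0 : w ≠ 0 := by intro h; rw [h] at hw; simp at hw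
  have hinf : (ℝ ∙ v) ⊓ (ℝ ∙ w) = ⊥ := by
    rw [Submodule.eq_bot_iff]
    rintro z ⟨hz1, hz2⟩
    rcases Submodule.mem_span_singleton.mp hz1 with ⟨s, rfl⟩
    rcases Submodule.mem_span_singleton.mp hz2 with ⟨t, hts⟩
    have h1 : ⟪v, t • w⟫ = 0 := by simp [real_inner_smul_right, hvw]
    rw [hts] at h1
    rw [real_inner_smul_right, real_inner_self_eq_norm_sq, hv] at h1
    simp at h1
    simp [hts.symm, h1]
  have := Submodule.finrank_sup_add_finrank_inf_eq (ℝ ∙ v) (ℝ ∙ w)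
  rw [hinf, finrank_span_singleton hv0, finrank_span_singleton hw0] at this
  simpa using this

set_option maxHeartbeats 2000000 in
lemma key (c : ℝ) (A B : F →ₗ[ℝ] F) (hA : A.IsSymmetric) (hB : B.IsSymmetric)
    (hAB : ∀ x, A (A x) + B (B x) = c • x) :
    ∀ m : ℕ, ∀ V : Submodule ℝ F,
      (∀ x ∈ V, A x ∈ V) → (∀ x ∈ V, B x ∈ V) → finrank ℝ V = m →
      ∃ k : ℕ, 2 * k ≤ m ∧ ∃ (v : ℕ → F) (α β γ e1 e2 : ℕ → ℝ),
        (∀ i, i < m → v i ∈ V) ∧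
        (∀ i, i < m → ∀ j, j < m → ⟪v i, v j⟫ = (if i = j then (1:ℝ) else 0)) ∧
        (∀ s, s < k → α s ^ 2 + β s ^ 2 + γ s ^ 2 = c ∧ α s * γ s ≠ 0 ∧
          A (v (2*s)) = α s • v (2*s) ∧ A (v (2*s+1)) = (-α s) • v (2*s+1) ∧
          B (v (2*s)) = β s • v (2*s) + γ s • v (2*s+1) ∧
          B (v (2*s+1)) = γ s • v (2*s) - β s • v (2*s+1)) ∧
        (∀ i, 2*k ≤ i → i < m → A (v i) = e1 i • v i ∧ B (v i) = e2 i • v i) := by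
  intro m
  induction m using Nat.strong_induction_on with
  | _ m ih =>
  intro V hVA hVB hVm
  rcases Nat.eq_zero_or_pos m with hm0 | hmpos
  · subst hm0
    exact ⟨0, by omega, fun _ => 0, 0, 0, 0, 0, 0,
      fun i hi => absurd hi (by omega), fun i hi => absurd hi (by omega),
      fun s hs => absurd hs (by omega), fun i h1 h2 => absurd h2 (by omega)⟩
  have hVne : V ≠ ⊥ := by
    intro hbot
    rw [hbot, finrank_bot] at hVm
    omega
  -- the operator C = AB + BA
  set C : F →ₗ[ℝ] F := A ∘ₗ B + B ∘ₗ A with hCdef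
  have hCapp : ∀ z, C z = A (B z) + B (A z) := fun z => rfl
  have hC : C.IsSymmetric := by
    intro z y
    rw [hCapp, hCapp, inner_add_left, inner_add_right,
      hA (B z) y, hB z (A y), hB (A z) y, hA z (B y)]
    ring
  have hCA : ∀ z, A (C z) = C (A z) := by
    intro z
    have h1 : A (A (B z)) = c • B z - B (B (B z)) := eq_sub_of_add_eq (hAB (B z))
    have h2 : B (A (A z)) = c • B z - B (B (B z)) := by
      have h3 : A (A z) = c • z - B (B z) := eq_sub_of_add_eq (hAB z)
      rw [h3, _root_.map_sub, _root_.map_smul]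
    rw [hCapp, hCapp, _root_.map_add, h1, h2]
    abel
  -- first eigenvector of A in V
  obtain ⟨v₁, a, hv₁V, hv₁n, hv₁e⟩ := exists_unit_eigen A hA V hVA hVne
  -- common eigenvector of A and C
  set W : Submodule ℝ F := V ⊓ Module.End.eigenspace A a with hWdef

  have hWC : ∀ z ∈ W, C z ∈ W := by
    rintro z ⟨hz1, hz2⟩
    have hz2' : A z = a • z := Module.End.mem_eigenspace_iff.mp hz2
    refine ⟨Submodule.add_mem _ (hVA _ (hVB _ hz1)) (hVB _ (hVA _ hz1)), ?_⟩
    refine Module.End.mem_eigenspace_iff.mpr ?_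
    show A (C z) = a • C z
    rw [hCA, hz2', _root_.map_smul]
  have hWne : W ≠ ⊥ := by
    intro hbot
    have hv₁W : v₁ ∈ W := ⟨hv₁V, Module.End.mem_eigenspace_iff.mpr hv₁e⟩
    rw [hbot, Submodule.mem_bot] at hv₁W
    rw [hv₁W] at hv₁n
    simp at hv₁n
  obtain ⟨v₀, c', hv₀W, hv₀n, hv₀e⟩ := exists_unit_eigen C hC W hWC hWne
  have hv₀V : v₀ ∈ V := hv₀W.1
  have hAv₀ : A v₀ = a • v₀ := Module.End.mem_eigenspace_iff.mp hv₀W.2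
  have hv₀0 : v₀ ≠ 0 := by intro h; rw [h] at hv₀n; simp at hv₀n
  have hvv : ⟪v₀, v₀⟫ = 1 := by
    rw [real_inner_self_eq_norm_sq, hv₀n]; norm_num
  set x : ℝ := ⟪v₀, B v₀⟫ with hxdef
  set u' : F := B v₀ - x • v₀ with hu'def
  have hv₀u' : ⟪v₀, u'⟫ = 0 := by
    rw [hu'def, inner_sub_right, real_inner_smul_right, hvv]
    simp [hxdef]
  by_cases hu : u' = 0
  · -- CASE single eigenvector
    have hBv₀ : B v₀ = x • v₀ := by
      have := sub_eq_zero.mp hu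
      rw [this]
    set V' : Submodule ℝ F := (ℝ ∙ v₀)ᗮ ⊓ V with hV'def
    have hV'o : ∀ z ∈ V', ⟪v₀, z⟫ = 0 := fun z hz =>
      Submodule.mem_orthogonal_singleton_iff_inner_right.mp hz.1
    have hA' : ∀ z ∈ V', A z ∈ V' := by
      rintro z ⟨hz1, hz2⟩
      refine ⟨Submodule.mem_orthogonal_singleton_iff_inner_right.mpr ?_, hVA _ hz2⟩
      rw [← hA v₀ z, hAv₀, real_inner_smul_left]
      rw [Submodule.mem_orthogonal_singleton_iff_inner_right.mp hz1]
      ring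
    have hB' : ∀ z ∈ V', B z ∈ V' := by
      rintro z ⟨hz1, hz2⟩
      refine ⟨Submodule.mem_orthogonal_singleton_iff_inner_right.mpr ?_, hVB _ hz2⟩
      rw [← hB v₀ z, hBv₀, real_inner_smul_left]
      rw [Submodule.mem_orthogonal_singleton_iff_inner_right.mp hz1]
      ring
    have hle : (ℝ ∙ v₀) ≤ V := by rwa [Submodule.span_singleton_le_iff_mem]
    have hfr : finrank ℝ V' = m - 1 := by
      refine Submodule.finrank_add_inf_finrank_orthogonal' hle ?_
      rw [finrank_span_singleton hv₀0, hVm]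
      omega
    obtain ⟨k, hk, v, al, be, ga, e1, e2, hmem, hON, hpair, hsing⟩ :=
      ih (m - 1) (by omega) V' hA' hB' hfr
    refine ⟨k, by omega, (fun i => if i = m - 1 then v₀ else v i), al, be, ga,
      (fun i => if i = m - 1 then a else e1 i),
      (fun i => if i = m - 1 then x else e2 i), ?_, ?_, ?_, ?_⟩
    · intro i hi
      by_cases h : i = m - 1
      · simpa [h] using hv₀V
      · simp only [if_neg h]
        exact (hmem i (by omega)).2
    · intro i hi j hj
      dsimp only
      by_cases h1 : i = m - 1 <;> by_cases h2 : j = m - 1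
      · simp [h1, h2, hvv, hv₀n]
      · rw [if_pos h1, if_neg h2, if_neg (by omega)]
        exact hV'o _ (hmem j (by omega))
      · rw [if_neg h1, if_pos h2, if_neg (by omega), real_inner_comm]
        exact hV'o _ (hmem i (by omega))
      · rw [if_neg h1, if_neg h2]
        exact hON i (by omega) j (by omega)
    · intro s hs
      have e1' : 2 * s ≠ m - 1 := by omega
      have e2' : 2 * s + 1 ≠ m - 1 := by omega
      simpa only [if_neg e1', if_neg e2'] using hpair s hs
    · intro i h1 h2
      by_cases h : i = m - 1
      · subst h
        simp only [if_pos rfl]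
        exact ⟨hAv₀, hBv₀⟩
      · simp only [if_neg h]
        exact hsing i h1 (by omega)
  · -- CASE 2-dimensional invariant subspace
    set r0 : ℝ := ‖u'‖ with hr0def
    have hr0 : r0 ≠ 0 := by simpa [hr0def] using hu
    have hr0pos : 0 < r0 := lt_of_le_of_ne (norm_nonneg _) (Ne.symm hr0)
    set w : F := r0⁻¹ • u' with hwdef
    have hu'V : u' ∈ V := Submodule.sub_mem _ (hVB _ hv₀V) (Submodule.smul_mem _ _ hv₀V)
    have hwV : w ∈ V := Submodule.smul_mem _ _ hu'V
    have hwn : ‖w‖ = 1 := by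
      rw [hwdef, norm_smul]
      simp [hr0def, abs_of_pos (inv_pos.mpr hr0pos), inv_mul_cancel₀ hr0, hu]
    have hww : ⟪w, w⟫ = 1 := by rw [real_inner_self_eq_norm_sq, hwn]; norm_num
    have hv₀w : ⟪v₀, w⟫ = 0 := by
      rw [hwdef, real_inner_smul_right, hv₀u']
      ring
    have hwv₀ : ⟪w, v₀⟫ = 0 := by rw [real_inner_comm]; exact hv₀w
    have hu'w : u' = r0 • w := by rw [hwdef, smul_smul, mul_inv_cancel₀ hr0, one_smul]
    have hBv₀ : B v₀ = x • v₀ + r0 • w := by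
      rw [← hu'w, hu'def]
      abel
    -- A on u' and w
    have hABv₀ : A (B v₀) = c' • v₀ - a • B v₀ := by
      have h1 : C v₀ = c' • v₀ := hv₀e
      rw [hCapp, hAv₀, _root_.map_smul] at h1
      have := eq_sub_of_add_eq h1
      rw [this]
    have hAu' : A u' = (c' - 2 * a * x) • v₀ - a • u' := by
      rw [hu'def, _root_.map_sub, _root_.map_smul, hABv₀, hAv₀, hBv₀]
      module
    have hAw : A w = (r0⁻¹ * (c' - 2 * a * x)) • v₀ - a • w := by
      rw [hwdef, _root_.map_smul, hAu', hu'w]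
      module
    have ht0 : r0⁻¹ * (c' - 2 * a * x) = 0 := by
      have h1 : ⟪v₀, A w⟫ = 0 := by
        rw [← hA v₀ w, hAv₀, real_inner_smul_left, hv₀w]
        ring
      rw [hAw, inner_sub_right, real_inner_smul_right, real_inner_smul_right, hvv, hv₀w] at h1
      linarith
    have hAw' : A w = (-a) • w := by
      rw [hAw, ht0]
      module
    -- B on u' and w
    have hBBv₀ : B (B v₀) = (c - a ^ 2) • v₀ := by
      have h1 := hAB v₀
      rw [hAv₀, _root_.map_smul, hAv₀] at h1
      have := eq_sub_of_add_eq' h1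
      rw [this]
      module
    have hBu' : B u' = (c - a ^ 2 - x ^ 2) • v₀ - (x * r0) • w := by
      rw [hu'def, _root_.map_sub, _root_.map_smul, hBBv₀, hBv₀]
      module
    have hBw0 : B w = (r0⁻¹ * (c - a ^ 2 - x ^ 2)) • v₀ - x • w := by
      rw [hwdef, _root_.map_smul, hBu', hu'w]
      module
    have hs' : r0⁻¹ * (c - a ^ 2 - x ^ 2) = r0 := by
      have h1 : ⟪v₀, B w⟫ = r0 := by
        rw [← hB v₀ w, hBv₀, inner_add_left, real_inner_smul_left, real_inner_smul_left,
          hv₀w, hww]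
        ring
      rw [hBw0, inner_sub_right, real_inner_smul_right, real_inner_smul_right, hvv, hv₀w] at h1
      linarith
    have hBw : B w = r0 • v₀ - x • w := by rw [hBw0, hs']
    have hc : a ^ 2 + x ^ 2 + r0 ^ 2 = c := by
      have h3 := congrArg (fun t => r0 * t) hs'
      simp only [← mul_assoc, mul_inv_cancel₀ hr0, one_mul] at h3
      nlinarith [h3]
    -- the 2-dimensional invariant subspace U and its complement
    set U : Submodule ℝ F := (ℝ ∙ v₀) ⊔ (ℝ ∙ w) with hUdef
    have hUV : U ≤ V := sup_le ((Submodule.span_singleton_le_iff_mem _ _).mpr hv₀V)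
      ((Submodule.span_singleton_le_iff_mem _ _).mpr hwV)
    have hUfr : finrank ℝ U = 2 := finrank_pair v₀ w hv₀n hwn hv₀w
    have hm2 : 2 ≤ m := by
      rw [← hUfr, ← hVm]
      exact Submodule.finrank_mono hUV
    set V' : Submodule ℝ F := Uᗮ ⊓ V with hV'def
    have hV'o : ∀ z ∈ V', ⟪v₀, z⟫ = 0 ∧ ⟪w, z⟫ = 0 := fun z hz =>
      mem_pair_orthogonal.mp hz.1
    have hA' : ∀ z ∈ V', A z ∈ V' := by
      rintro z ⟨hz1, hz2⟩
      obtain ⟨ho1, ho2⟩ := mem_pair_orthogonal.mp hz1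
      refine ⟨mem_pair_orthogonal.mpr ⟨?_, ?_⟩, hVA _ hz2⟩
      · rw [← hA v₀ z, hAv₀, real_inner_smul_left, ho1]; ring
      · rw [← hA w z, hAw', real_inner_smul_left, ho2]; ring
    have hB' : ∀ z ∈ V', B z ∈ V' := by
      rintro z ⟨hz1, hz2⟩
      obtain ⟨ho1, ho2⟩ := mem_pair_orthogonal.mp hz1
      refine ⟨mem_pair_orthogonal.mpr ⟨?_, ?_⟩, hVB _ hz2⟩
      · rw [← hB v₀ z, hBv₀, inner_add_left, real_inner_smul_left, real_inner_smul_left,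
          ho1, ho2]; ring
      · rw [← hB w z, hBw, inner_sub_left, real_inner_smul_left, real_inner_smul_left,
          ho1, ho2]; ring
    have hfr : finrank ℝ V' = m - 2 := by
      refine Submodule.finrank_add_inf_finrank_orthogonal' hUV ?_
      rw [hUfr, hVm]
      omega
    obtain ⟨k, hk, v, al, be, ga, e1, e2, hmem, hON, hpair, hsing⟩ :=
      ih (m - 2) (by omega) V' hA' hB' hfr
    have hmemV : ∀ i, i < m - 2 → v i ∈ V := fun i hi => (hmem i hi).2
    have hinner : ∀ (p q p' q' : ℝ), ⟪p • v₀ + q • w, p' • v₀ + q' • w⟫ = p * p' + q * q' := by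
      intro p q p' q'
      simp only [inner_add_left, inner_add_right, real_inner_smul_left,
        real_inner_smul_right, hvv, hww, hv₀w, hwv₀]
      ring
    have hoV' : ∀ (p q : ℝ) (z : F), z ∈ V' → ⟪p • v₀ + q • w, z⟫ = 0 := by
      intro p q z hz
      obtain ⟨ho1, ho2⟩ := hV'o z hz
      rw [inner_add_left, real_inner_smul_left, real_inner_smul_left, ho1, ho2]
      ring
    by_cases ha0 : a = 0
    · -- a = 0 : two more common eigenvectors, placed at the end
      have hAv₀0 : A v₀ = 0 := by rw [hAv₀, ha0, zero_smul]
      have hAw0 : A w = 0 := by rw [hAw', ha0, neg_zero, zero_smul]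
      set r : ℝ := Real.sqrt (x ^ 2 + r0 ^ 2) with hrdef
      have hxr0pos : 0 < x ^ 2 + r0 ^ 2 := by positivity
      have hrpos : 0 < r := Real.sqrt_pos.mpr hxr0pos
      have hrr : r ^ 2 = x ^ 2 + r0 ^ 2 := Real.sq_sqrt (le_of_lt hxr0pos)
      set N : ℝ := r0 ^ 2 + (r - x) ^ 2 with hNdef
      have hNpos : 0 < N := by positivity
      set sN : ℝ := Real.sqrt N with hsNdef
      have hsNpos : 0 < sN := Real.sqrt_pos.mpr hNpos
      have hsNne : sN ≠ 0 := ne_of_gt hsNpos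
      have hsN2 : sN ^ 2 = N := Real.sq_sqrt (le_of_lt hNpos)
      set g1 : F := sN⁻¹ • (r0 • v₀ + (r - x) • w) with hg1def
      set g2 : F := sN⁻¹ • ((x - r) • v₀ + r0 • w) with hg2def
      have hg1V : g1 ∈ V := Submodule.smul_mem _ _ (Submodule.add_mem _
        (Submodule.smul_mem _ _ hv₀V) (Submodule.smul_mem _ _ hwV))
      have hg2V : g2 ∈ V := Submodule.smul_mem _ _ (Submodule.add_mem _
        (Submodule.smul_mem _ _ hv₀V) (Submodule.smul_mem _ _ hwV))
      have hBg1raw : B (r0 • v₀ + (r - x) • w) = r • (r0 • v₀ + (r - x) • w) := by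
        have step : B (r0 • v₀ + (r - x) • w)
            = (r0 * x + (r - x) * r0) • v₀ + (r0 * r0 - (r - x) * x) • w := by
          rw [_root_.map_add, _root_.map_smul, _root_.map_smul, hBv₀, hBw]
          module
        rw [step, show r0 * x + (r - x) * r0 = r * r0 from by ring,
          show r0 * r0 - (r - x) * x = r * (r - x) from by linear_combination -hrr]
        module
      have hBg2raw : B ((x - r) • v₀ + r0 • w) = (-r) • ((x - r) • v₀ + r0 • w) := by
        have step : B ((x - r) • v₀ + r0 • w)
            = ((x - r) * x + r0 * r0) • v₀ + ((x - r) * r0 - r0 * x) • w := by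
          rw [_root_.map_add, _root_.map_smul, _root_.map_smul, hBv₀, hBw]
          module
        rw [step, show (x - r) * x + r0 * r0 = (-r) * (x - r) from by linear_combination -hrr,
          show (x - r) * r0 - r0 * x = (-r) * r0 from by ring]
        module
      have hBg1 : B g1 = r • g1 := by
        rw [hg1def, _root_.map_smul, hBg1raw, smul_comm]
      have hBg2 : B g2 = (-r) • g2 := by
        rw [hg2def, _root_.map_smul, hBg2raw, smul_comm]
      have hAg1 : A g1 = (0 : ℝ) • g1 := by
        rw [hg1def, _root_.map_smul, _root_.map_add, _root_.map_smul, _root_.map_smul, hAv₀0, hAw0]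
        simp
      have hAg2 : A g2 = (0 : ℝ) • g2 := by
        rw [hg2def, _root_.map_smul, _root_.map_add, _root_.map_smul, _root_.map_smul, hAv₀0, hAw0]
        simp
      have hg11 : ⟪g1, g1⟫ = 1 := by
        rw [hg1def, real_inner_smul_left, real_inner_smul_right, hinner,
          show r0 * r0 + (r - x) * (r - x) = N from by rw [hNdef]; ring, ← hsN2]
        field_simp [hsNne]
      have hg22 : ⟪g2, g2⟫ = 1 := by
        rw [hg2def, real_inner_smul_left, real_inner_smul_right, hinner,
          show (x - r) * (x - r) + r0 * r0 = N from by rw [hNdef]; ring, ← hsN2]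
        field_simp [hsNne]
      have hg12 : ⟪g1, g2⟫ = 0 := by
        rw [hg1def, hg2def, real_inner_smul_left, real_inner_smul_right, hinner]
        rw [show r0 * (x - r) + (r - x) * r0 = 0 from by ring]
        ring
      have hg21 : ⟪g2, g1⟫ = 0 := by rw [real_inner_comm]; exact hg12
      have hg1o : ∀ z, z ∈ V' → ⟪g1, z⟫ = 0 := by
        intro z hz
        rw [hg1def, real_inner_smul_left, hoV' _ _ _ hz]
        ring
      have hg2o : ∀ z, z ∈ V' → ⟪g2, z⟫ = 0 := by
        intro z hz
        rw [hg2def, real_inner_smul_left, hoV' _ _ _ hz]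
        ring
      refine ⟨k, by omega,
        (fun i => if i = m - 2 then g1 else if i = m - 1 then g2 else v i), al, be, ga,
        (fun i => if i = m - 2 then 0 else if i = m - 1 then 0 else e1 i),
        (fun i => if i = m - 2 then r else if i = m - 1 then -r else e2 i), ?_, ?_, ?_, ?_⟩
      · intro i hi
        dsimp only
        by_cases h2 : i = m - 2
        · rw [if_pos h2]; exact hg1V
        by_cases h1 : i = m - 1
        · rw [if_neg h2, if_pos h1]; exact hg2V
        · rw [if_neg h2, if_neg h1]
          exact hmemV i (by omega)
      · intro i hi j hj
        dsimp only
        by_cases hi2 : i = m - 2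
        · rw [if_pos hi2]
          by_cases hj2 : j = m - 2
          · rw [if_pos hj2, if_pos (by omega : i = j), hg11]
          by_cases hj1 : j = m - 1
          · rw [if_neg hj2, if_pos hj1, if_neg (by omega : ¬ i = j)]
            exact hg12
          · rw [if_neg hj2, if_neg hj1, if_neg (by omega : ¬ i = j)]
            exact hg1o _ (hmem j (by omega))
        by_cases hi1 : i = m - 1
        · rw [if_neg hi2, if_pos hi1]
          by_cases hj2 : j = m - 2
          · rw [if_pos hj2, if_neg (by omega : ¬ i = j)]
            exact hg21
          by_cases hj1 : j = m - 1
          · rw [if_neg hj2, if_pos hj1, if_pos (by omega : i = j), hg22]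
          · rw [if_neg hj2, if_neg hj1, if_neg (by omega : ¬ i = j)]
            exact hg2o _ (hmem j (by omega))
        · rw [if_neg hi2, if_neg hi1]
          by_cases hj2 : j = m - 2
          · rw [if_pos hj2, if_neg (by omega : ¬ i = j), real_inner_comm]
            exact hg1o _ (hmem i (by omega))
          by_cases hj1 : j = m - 1
          · rw [if_neg hj2, if_pos hj1, if_neg (by omega : ¬ i = j), real_inner_comm]
            exact hg2o _ (hmem i (by omega))
          · rw [if_neg hj2, if_neg hj1]
            exact hON i (by omega) j (by omega)
      · intro s hs
        dsimp only
        have e1' : ¬ (2 * s = m - 2) := by omega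
        have e2' : ¬ (2 * s = m - 1) := by omega
        have e3' : ¬ (2 * s + 1 = m - 2) := by omega
        have e4' : ¬ (2 * s + 1 = m - 1) := by omega
        simp only [if_neg e1', if_neg e2', if_neg e3', if_neg e4']
        exact hpair s hs
      · intro i h1 h2
        dsimp only
        by_cases hi2 : i = m - 2
        · simp only [if_pos hi2]
          exact ⟨hAg1, hBg1⟩
        by_cases hi1 : i = m - 1
        · simp only [if_neg hi2, if_pos hi1]
          exact ⟨hAg2, hBg2⟩
        · simp only [if_neg hi2, if_neg hi1]
          exact hsing i h1 (by omega)
    · -- a ≠ 0 : a genuine 2x2 block, placed at the front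
      refine ⟨k + 1, by omega,
        (fun i => if i = 0 then v₀ else if i = 1 then w else v (i - 2)),
        (fun s => if s = 0 then a else al (s - 1)),
        (fun s => if s = 0 then x else be (s - 1)),
        (fun s => if s = 0 then r0 else ga (s - 1)),
        (fun i => e1 (i - 2)), (fun i => e2 (i - 2)), ?_, ?_, ?_, ?_⟩
      · intro i hi
        by_cases h0 : i = 0
        · simpa [h0] using hv₀V
        by_cases h1 : i = 1
        · simpa [h0, h1] using hwV
        · simp only [if_neg h0, if_neg h1]
          exact hmemV (i - 2) (by omega)
      · intro i hi j hj
        dsimp only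
        have hONo : ∀ p, p < m - 2 → ⟪v₀, v p⟫ = 0 ∧ ⟪w, v p⟫ = 0 :=
          fun p hp => hV'o _ (hmem p hp)
        by_cases hi0 : i = 0
        · rw [if_pos hi0]
          by_cases hj0 : j = 0
          · rw [if_pos hj0, if_pos (by omega : i = j), hvv]
          by_cases hj1 : j = 1
          · rw [if_neg hj0, if_pos hj1, if_neg (by omega : ¬ i = j)]
            exact hv₀w
          · rw [if_neg hj0, if_neg hj1, if_neg (by omega : ¬ i = j)]
            exact (hONo (j - 2) (by omega)).1
        by_cases hi1 : i = 1
        · rw [if_neg hi0, if_pos hi1]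
          by_cases hj0 : j = 0
          · rw [if_pos hj0, if_neg (by omega : ¬ i = j)]
            exact hwv₀
          by_cases hj1 : j = 1
          · rw [if_neg hj0, if_pos hj1, if_pos (by omega : i = j), hww]
          · rw [if_neg hj0, if_neg hj1, if_neg (by omega : ¬ i = j)]
            exact (hONo (j - 2) (by omega)).2
        · rw [if_neg hi0, if_neg hi1]
          by_cases hj0 : j = 0
          · rw [if_pos hj0, if_neg (by omega : ¬ i = j), real_inner_comm]
            exact (hONo (i - 2) (by omega)).1
          by_cases hj1 : j = 1
          · rw [if_neg hj0, if_pos hj1, if_neg (by omega : ¬ i = j), real_inner_comm]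
            exact (hONo (i - 2) (by omega)).2
          · rw [if_neg hj0, if_neg hj1]
            rw [show ((if i = j then (1:ℝ) else 0)) = (if i - 2 = j - 2 then (1:ℝ) else 0) by
              by_cases h : i = j
              · rw [if_pos h, if_pos (by omega)]
              · rw [if_neg h, if_neg (by omega)]]
            exact hON (i - 2) (by omega) (j - 2) (by omega)
      · intro s hs
        dsimp only
        by_cases hs0 : s = 0
        · subst hs0
          norm_num
          refine ⟨hc, ⟨ha0, hr0⟩, hAv₀, hAw'.trans (neg_smul a w), hBv₀, ?_⟩
          rw [hBw]
        · have h2s : ¬ (2 * s = 0) := by omega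
          have h2s1 : ¬ (2 * s = 1) := by omega
          have h2s1' : ¬ (2 * s + 1 = 0) := by omega
          have h2s1'' : ¬ (2 * s + 1 = 1) := by omega
          simp only [if_neg hs0, if_neg h2s, if_neg h2s1, if_neg h2s1', if_neg h2s1'']
          have e2 : 2 * s - 2 = 2 * (s - 1) := by omega
          have e3 : 2 * s + 1 - 2 = 2 * (s - 1) + 1 := by omega
          rw [e2, e3]
          exact hpair (s - 1) (by omega)
      · intro i h1 h2
        dsimp only
        have hi0 : ¬ (i = 0) := by omega
        have hi1 : ¬ (i = 1) := by omega
        simp only [if_neg hi0, if_neg hi1]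
        exact hsing (i - 2) (by omega) (by omega)

set_option maxHeartbeats 1000000 in
theorem stmt0 (n : ℕ) (c : ℝ) (Q1 Q2 : Matrix (Fin n) (Fin n) ℝ)
    (hQ1 : Q1.IsSymm) (hQ2 : Q2.IsSymm)
    (h : Q1 * Q1 + Q2 * Q2 = c • (1 : Matrix (Fin n) (Fin n) ℝ)) :
    ∃ P ∈ Matrix.orthogonalGroup (Fin n) ℝ,
      ∃ (k : ℕ) (hk : 2 * k ≤ n) (α β γ : ℕ → ℝ),
        (∀ s, s < k → α s ^ 2 + β s ^ 2 + γ s ^ 2 = c ∧ α s * γ s ≠ 0) ∧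
        (∀ s, ∀ hs : s < k,
          (Pᵀ * Q1 * P) ⟨2 * s, by omega⟩ ⟨2 * s, by omega⟩ = α s ∧
          (Pᵀ * Q1 * P) ⟨2 * s + 1, by omega⟩ ⟨2 * s + 1, by omega⟩ = -α s ∧
          (Pᵀ * Q1 * P) ⟨2 * s, by omega⟩ ⟨2 * s + 1, by omega⟩ = 0 ∧
          (Pᵀ * Q2 * P) ⟨2 * s, by omega⟩ ⟨2 * s, by omega⟩ = β s ∧
          (Pᵀ * Q2 * P) ⟨2 * s + 1, by omega⟩ ⟨2 * s + 1, by omega⟩ = -β s ∧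
          (Pᵀ * Q2 * P) ⟨2 * s, by omega⟩ ⟨2 * s + 1, by omega⟩ = γ s) ∧
        (∀ i j : Fin n, i ≠ j →
          ¬((i : ℕ) / 2 = (j : ℕ) / 2 ∧ (i : ℕ) < 2 * k) →
          (Pᵀ * Q1 * P) i j = 0 ∧ (Pᵀ * Q2 * P) i j = 0) := by
  classical
  set A : EuclideanSpace ℝ (Fin n) →ₗ[ℝ] EuclideanSpace ℝ (Fin n) := Matrix.toEuclideanLin Q1 with hAdef
  set B : EuclideanSpace ℝ (Fin n) →ₗ[ℝ] EuclideanSpace ℝ (Fin n) := Matrix.toEuclideanLin Q2 with hBdef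
  have hherm1 : Q1.IsHermitian := by
    rwa [Matrix.IsHermitian, Matrix.conjTranspose, Matrix.IsSymm] at *
  have hherm2 : Q2.IsHermitian := by
    rwa [Matrix.IsHermitian, Matrix.conjTranspose, Matrix.IsSymm] at *
  have hA : A.IsSymmetric := Matrix.isHermitian_iff_isSymmetric.mp hherm1
  have hB : B.IsSymmetric := Matrix.isHermitian_iff_isSymmetric.mp hherm2
  have hmul : ∀ (M N : Matrix (Fin n) (Fin n) ℝ) (x : EuclideanSpace ℝ (Fin n)),
      Matrix.toEuclideanLin (M * N) x = Matrix.toEuclideanLin M (Matrix.toEuclideanLin N x) := by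
    intro M N x
    simp [Matrix.toEuclideanLin_apply, Matrix.mulVec_mulVec]
  have hAB : ∀ x, A (A x) + B (B x) = c • x := by
    intro x
    have h1 : A (A x) = Matrix.toEuclideanLin (Q1 * Q1) x := (hmul Q1 Q1 x).symm
    have h2 : B (B x) = Matrix.toEuclideanLin (Q2 * Q2) x := (hmul Q2 Q2 x).symm
    have h3 : Matrix.toEuclideanLin (Q1 * Q1) x + Matrix.toEuclideanLin (Q2 * Q2) x
        = Matrix.toEuclideanLin (Q1 * Q1 + Q2 * Q2) x := by
      rw [_root_.map_add, LinearMap.add_apply]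
    rw [h1, h2, h3, h]
    simp only [Matrix.toEuclideanLin_apply, Matrix.smul_mulVec, Matrix.one_mulVec]
    rfl
  obtain ⟨k, hk, v, al, be, ga, e1, e2, hmem, hON, hpair, hsing⟩ :=
    key c A B hA hB hAB n ⊤ (fun x _ => trivial) (fun x _ => trivial)
      (by rw [finrank_top]; exact finrank_euclideanSpace_fin)
  set P : Matrix (Fin n) (Fin n) ℝ := Matrix.of (fun i j : Fin n => v (j : ℕ) i) with hPdef
  have hinner : ∀ p q : ℕ, p < n → q < n → ∑ l : Fin n, v p l * v q l = (if p = q then (1:ℝ) else 0) := by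
    intro p q hp hq
    have := hON p hp q hq
    rw [PiLp.inner_apply] at this
    simpa [RCLike.inner_apply, mul_comm] using this
  have hPorth : P ∈ Matrix.orthogonalGroup (Fin n) ℝ := by
    rw [Matrix.mem_orthogonalGroup_iff']
    ext i j
    have : (Pᵀ * P) i j = ∑ l : Fin n, v (i : ℕ) l * v (j : ℕ) l := by
      simp [Matrix.mul_apply, Matrix.star_apply, hPdef, mul_comm]
    rw [this, hinner _ _ i.isLt j.isLt, Matrix.one_apply]
    by_cases hij : i = j
    · simp [hij]
    · rw [if_neg hij, if_neg (fun hh => hij (Fin.val_injective hh))]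
  have hentry : ∀ (Q : Matrix (Fin n) (Fin n) ℝ) (i j : Fin n),
      (Pᵀ * Q * P) i j = ⟪v (i : ℕ), Matrix.toEuclideanLin Q (v (j : ℕ))⟫ := by
    intro Q i j
    rw [Matrix.mul_assoc, PiLp.inner_apply]
    simp only [Matrix.mul_apply, Matrix.transpose_apply, hPdef, Matrix.of_apply,
      RCLike.inner_apply, conj_trivial, Matrix.toEuclideanLin_apply]
    simp only [Matrix.mulVec, dotProduct, PiLp.toLp_apply,
      Finset.sum_mul, Finset.mul_sum]
    exact Finset.sum_congr rfl fun _ _ => Finset.sum_congr rfl fun _ _ => by ring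
  refine ⟨P, hPorth, k, hk, al, be, ga,
    (fun s hs => ⟨(hpair s hs).1, (hpair s hs).2.1⟩), ?_, ?_⟩
  · intro s hs
    obtain ⟨hsum, hne0, hA1, hA2, hB1, hB2⟩ := hpair s hs
    have h2s : 2 * s < n := by omega
    have h2s1 : 2 * s + 1 < n := by omega
    have i00 : ⟪v (2 * s), v (2 * s)⟫ = 1 := by rw [hON _ h2s _ h2s, if_pos rfl]
    have i11 : ⟪v (2 * s + 1), v (2 * s + 1)⟫ = 1 := by rw [hON _ h2s1 _ h2s1, if_pos rfl]
    have i01 : ⟪v (2 * s), v (2 * s + 1)⟫ = 0 := by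
      rw [hON _ h2s _ h2s1, if_neg (by omega)]
    have i10 : ⟪v (2 * s + 1), v (2 * s)⟫ = 0 := by
      rw [hON _ h2s1 _ h2s, if_neg (by omega)]
    refine ⟨?_, ?_, ?_, ?_, ?_, ?_⟩
    · rw [hentry]
      show ⟪v (2 * s), Matrix.toEuclideanLin Q1 (v (2 * s))⟫ = al s
      rw [← hAdef, hA1, real_inner_smul_right, i00, mul_one]
    · rw [hentry]
      show ⟪v (2 * s + 1), Matrix.toEuclideanLin Q1 (v (2 * s + 1))⟫ = -al s
      rw [← hAdef, hA2, real_inner_smul_right, i11, mul_one]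
    · rw [hentry]
      show ⟪v (2 * s), Matrix.toEuclideanLin Q1 (v (2 * s + 1))⟫ = 0
      rw [← hAdef, hA2, real_inner_smul_right, i01, mul_zero]
    · rw [hentry]
      show ⟪v (2 * s), Matrix.toEuclideanLin Q2 (v (2 * s))⟫ = be s
      rw [← hBdef, hB1, inner_add_right, real_inner_smul_right, real_inner_smul_right,
        i00, i01]
      ring
    · rw [hentry]
      show ⟪v (2 * s + 1), Matrix.toEuclideanLin Q2 (v (2 * s + 1))⟫ = -be s
      rw [← hBdef, hB2, inner_sub_right, real_inner_smul_right, real_inner_smul_right,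
        i10, i11]
      ring
    · rw [hentry]
      show ⟪v (2 * s), Matrix.toEuclideanLin Q2 (v (2 * s + 1))⟫ = ga s
      rw [← hBdef, hB2, inner_sub_right, real_inner_smul_right, real_inner_smul_right,
        i00, i01]
      ring
  · intro i j hneq hnot
    have hij : (i : ℕ) ≠ (j : ℕ) := fun hh => hneq (Fin.val_injective hh)
    have hi : (i : ℕ) < n := i.isLt
    have hj : (j : ℕ) < n := j.isLt
    constructor
    · rw [hentry, ← hAdef]
      by_cases hjk : (j : ℕ) < 2 * k
      · set s := (j : ℕ) / 2 with hsdef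
        have hs : s < k := by omega
        obtain ⟨_, _, hA1, hA2, _, _⟩ := hpair s hs
        have hcase : (j : ℕ) = 2 * s ∨ (j : ℕ) = 2 * s + 1 := by omega
        rcases hcase with hc1 | hc1 <;> rw [hc1]
        · rw [hA1, real_inner_smul_right, hON _ hi _ (by omega), if_neg (by omega), mul_zero]
        · rw [hA2, real_inner_smul_right, hON _ hi _ (by omega), if_neg (by omega), mul_zero]
      · obtain ⟨hAe, _⟩ := hsing (j : ℕ) (by omega) hj
        rw [hAe, real_inner_smul_right, hON _ hi _ hj, if_neg hij, mul_zero]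
    · rw [hentry, ← hBdef]
      by_cases hjk : (j : ℕ) < 2 * k
      · set s := (j : ℕ) / 2 with hsdef
        have hs : s < k := by omega
        obtain ⟨_, _, _, _, hB1, hB2⟩ := hpair s hs
        have hcase : (j : ℕ) = 2 * s ∨ (j : ℕ) = 2 * s + 1 := by omega
        rcases hcase with hc1 | hc1 <;> rw [hc1]
        · rw [hB1, inner_add_right, real_inner_smul_right, real_inner_smul_right,
            hON _ hi _ (by omega : 2 * s < n), hON _ hi _ (by omega : 2 * s + 1 < n),
            if_neg (by omega), if_neg (by omega)]
          ring
        · rw [hB2, inner_sub_right, real_inner_smul_right, real_inner_smul_right,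
            hON _ hi _ (by omega : 2 * s < n), hON _ hi _ (by omega : 2 * s + 1 < n),
            if_neg (by omega), if_neg (by omega)]
          ring
      · obtain ⟨_, hBe⟩ := hsing (j : ℕ) (by omega) hj
        rw [hBe, real_inner_smul_right, hON _ hi _ hj, if_neg hij, mul_zero]
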